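/- arXiv:2409.19414 — 3 statements merged into one kernel-verified Lean document; each statement's English description precedes it below -/
import Mathlib

section
/- The map f(x) = ⊛_{i=1}^n h(x_i), sending a tuple x ∈ ℝ^n to the sequential circular convolution of the vectors h(x_i) = (-x_i, 1, 0,...,0) ∈ ℝ^{n+1}, is invariant under permutations of (x_1,...,x_n) and separating: f(x) = f(y) if and only if the multisets {x_1,...,x_n} and {y_1,...,y_n} are equal. -/
open Polynomial

/-- Circular convolution over `ZMod m`. -/
def circConv {m : ℕ} [NeZero m] (u v : ZMod m → ℝ) : ZMod m → ℝ :=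
  fun k => ∑ j : ZMod m, u j * v (k - j)

/-- Sequential circular convolution of a list of vectors; the empty convolution is
the unit impulse `δ₀`. -/
def circConvList {m : ℕ} [NeZero m] : List (ZMod m → ℝ) → (ZMod m → ℝ)
  | [] => fun k => if k = 0 then 1 else 0
  | u :: l => circConv u (circConvList l)

theorem list_perm_exists_equiv {α : Type*} {l₁ l₂ : List α} (hp : l₁.Perm l₂) :
    ∃ σ : Fin l₁.length ≃ Fin l₂.length, ∀ i, l₁.get i = l₂.get (σ i) := by
  induction hp with
  | nil => exact ⟨Equiv.refl _, by simp⟩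
  | cons a h ih =>
      obtain ⟨σ, hσ⟩ := ih
      refine ⟨(finSuccEquiv _).trans ((σ.optionCongr).trans (finSuccEquiv _).symm), fun i => ?_⟩
      refine Fin.cases ?_ (fun j => ?_) i
      · simp
      · simpa using hσ j
  | swap a b l =>
      refine ⟨Equiv.swap ⟨0, by simp⟩ ⟨1, by simp⟩, fun i => ?_⟩
      rcases i with ⟨(_|_|k), hk⟩
      · simp [Equiv.swap_apply_def, Fin.ext_iff, List.get]
      · simp [Equiv.swap_apply_def, Fin.ext_iff, List.get]
      · simp [Equiv.swap_apply_def, Fin.ext_iff, List.get]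
  | trans h1 h2 ih1 ih2 =>
      obtain ⟨σ₁, hσ₁⟩ := ih1
      obtain ⟨σ₂, hσ₂⟩ := ih2
      exact ⟨σ₁.trans σ₂, fun i => (hσ₁ i).trans (hσ₂ _)⟩

theorem natDegree_prod_XsubC_list (l : List ℝ) :
    (l.map (fun c => X - C c)).prod.natDegree ≤ l.length := by
  refine le_trans (Polynomial.natDegree_list_prod_le _) ?_
  rw [List.map_map]
  have : ∀ c : ℝ, (natDegree ∘ fun c => X - C c) c ≤ 1 := fun c => by
    simp [Polynomial.natDegree_X_sub_C]
  calc (l.map (natDegree ∘ fun c => X - C c)).sum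
      ≤ (l.map (fun _ => (1:ℕ))).sum := by
        apply List.sum_le_sum
        intro a ha
        set_option linter.unnecessarySimpa false in simpa using this a
    _ = l.length := by simp [List.map_const', Nat.mul_comm]
  
theorem circConvList_eq_coeff {n : ℕ} (h : ℝ → (ZMod (n + 1) → ℝ))
    (hh : ∀ c, h c = fun k => if k = 0 then -c else if k = 1 then 1 else 0) :
    ∀ (l : List ℝ), l.length ≤ n → ∀ k : ZMod (n+1),
      circConvList (l.map h) k = ((l.map (fun c => X - C c)).prod).coeff k.val := by
  intro l
  induction l with
  | nil =>
      intro _ k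
      simp only [List.map_nil, circConvList, List.prod_nil, Polynomial.coeff_one]
      by_cases hk : k = 0
      · simp [hk, ZMod.val_zero]
      · rw [if_neg hk, if_neg]
        · intro hv
          exact hk ((ZMod.val_eq_zero k).1 hv)

  | cons c t ih =>
      intro hlen k
      have hlen' : t.length + 1 ≤ n := by simpa using hlen
      have hn1 : 1 ≤ n := by omega
      have htlen : t.length ≤ n - 1 := by omega
      have hm2 : 1 < n + 1 := by omega
      haveI : Fact (1 < n + 1) := ⟨hm2⟩
      have h10 : (1 : ZMod (n+1)) ≠ 0 := by
        intro hcon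
        have : (1 : ZMod (n+1)).val = 1 := ZMod.val_one (n+1)
        rw [hcon] at this
        simp [ZMod.val_zero] at this
      set P := (t.map (fun c => X - C c)).prod with hP
      have ihP : ∀ k : ZMod (n+1), circConvList (t.map h) k = P.coeff k.val :=
        fun k => ih (le_trans htlen (by omega)) k
      have hdeg : P.natDegree ≤ t.length := natDegree_prod_XsubC_list t
      -- LHS computation
      have hL : circConvList ((c :: t).map h) k
          = -c * P.coeff k.val + circConvList (t.map h) (k - 1) := by
        simp only [List.map_cons, circConvList, circConv]
        have hterm : ∀ j : ZMod (n+1), h c j * circConvList (t.map h) (k - j)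
            = (if j = 0 then -c * circConvList (t.map h) k else 0)
              + (if j = 1 then circConvList (t.map h) (k - 1) else 0) := by
          intro j
          rw [hh]
          by_cases hj0 : j = 0
          · subst hj0
            simp [h10.symm]
          · by_cases hj1 : j = 1
            · subst hj1
              simp [h10]
            · simp [hj0, hj1]
        rw [Finset.sum_congr rfl (fun j _ => hterm j), Finset.sum_add_distrib,
          Finset.sum_ite_eq' Finset.univ (0 : ZMod (n+1)),
          Finset.sum_ite_eq' Finset.univ (1 : ZMod (n+1))]
        simp [ihP]
      rw [hL, ihP]
      -- RHS computation
      simp only [List.map_cons, List.prod_cons]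
      rw [sub_mul, Polynomial.coeff_sub, Polynomial.coeff_C_mul]
      rcases Nat.eq_zero_or_eq_succ_pred k.val with hk0 | hkd
      · -- k.val = 0, so k = 0
        have hk : k = 0 := (ZMod.val_eq_zero k).1 hk0
        subst hk
        rw [ZMod.val_zero]
        have hX0 : (X * P).coeff 0 = 0 := by
          simp [Polynomial.coeff_X_mul_zero]
        rw [hX0]
        have hval : ((0 : ZMod (n+1)) - 1).val = n := by
          rw [zero_sub]
          exact ZMod.val_neg_one n
        rw [hval]
        have hPn : P.coeff n = 0 := by
          apply Polynomial.coeff_eq_zero_of_natDegree_lt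
          omega
        rw [hPn]
        ring
      · -- k.val = d + 1
        set d := k.val - 1 with hd
        have hkval : k.val = d + 1 := by
          omega
        have hdlt : d < n + 1 := by
          have := ZMod.val_lt k
          omega
        have hksub : (k - 1).val = d := by
          have hkcast : k = ((d + 1 : ℕ) : ZMod (n+1)) := by
            rw [← hkval, ZMod.natCast_val, ZMod.cast_id]
          rw [hkcast]
          push_cast
          rw [add_sub_cancel_right, ZMod.val_cast_of_lt hdlt]
        rw [hksub, hkval, Polynomial.coeff_X_mul]
        ring

theorem f_eq_coeff {n : ℕ} (h : ℝ → (ZMod (n + 1) → ℝ))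
    (hh : ∀ c, h c = fun k => if k = 0 then -c else if k = 1 then 1 else 0)
    (f : (Fin n → ℝ) → (ZMod (n + 1) → ℝ))
    (hf : ∀ x, f x = circConvList (List.ofFn fun i => h (x i)))
    (x : Fin n → ℝ) (k : ZMod (n+1)) :
    f x k = (∏ i, (X - C (x i))).coeff k.val := by
  rw [hf]
  have h1 : (List.ofFn fun i => h (x i)) = (List.ofFn x).map h := by
    rw [List.map_ofFn]
    rfl
  have h2 : ((List.ofFn x).map (fun c => X - C c)).prod = ∏ i, (X - C (x i)) := by
    rw [List.map_ofFn, List.prod_ofFn]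
    rfl
  rw [h1, circConvList_eq_coeff h hh (List.ofFn x) (by simp), h2]

/-- The map `f(x) = ⊛ᵢ h(xᵢ)`, with `h(c) = (-c, 1, 0, ..., 0) ∈ ℝ^{n+1}`,
is permutation invariant, and separating: `f x = f y` iff `y` is a permutation of `x`. -/
theorem circConv_representation_invariant_and_separating
    (n : ℕ) (h : ℝ → (ZMod (n + 1) → ℝ))
    (hh : ∀ c, h c = fun k => if k = 0 then -c else if k = 1 then 1 else 0)
    (f : (Fin n → ℝ) → (ZMod (n + 1) → ℝ))
    (hf : ∀ x, f x = circConvList (List.ofFn fun i => h (x i))) :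
    (∀ (x : Fin n → ℝ) (σ : Equiv.Perm (Fin n)), f (x ∘ σ) = f x) ∧
    (∀ x y : Fin n → ℝ, f x = f y ↔ ∃ σ : Equiv.Perm (Fin n), ∀ i, y i = x (σ i)) := by
  have key : ∀ (x : Fin n → ℝ) (k : ZMod (n+1)),
      f x k = (∏ i, (X - C (x i))).coeff k.val := f_eq_coeff h hh f hf
  have inv : ∀ (x : Fin n → ℝ) (σ : Equiv.Perm (Fin n)), f (x ∘ σ) = f x := by
    intro x σ
    funext k
    rw [key, key]
    congr 1
    exact Equiv.prod_comp σ (fun i => X - C (x i))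
  refine ⟨inv, fun x y => ⟨?_, ?_⟩⟩
  · intro hxy
    -- polynomials are equal
    have hdx : (∏ i, (X - C (x i))).natDegree ≤ n := by
      refine le_trans (Polynomial.natDegree_prod_le _ _) ?_
      simp [Polynomial.natDegree_X_sub_C]
    have hdy : (∏ i, (X - C (y i))).natDegree ≤ n := by
      refine le_trans (Polynomial.natDegree_prod_le _ _) ?_
      simp [Polynomial.natDegree_X_sub_C]
    have hpoly : (∏ i, (X - C (x i))) = (∏ i, (X - C (y i))) := by
      ext d
      by_cases hdn : d < n + 1
      · have := congrFun hxy ((d : ZMod (n+1)))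
        rw [key, key, ZMod.val_cast_of_lt hdn] at this
        exact this
      · rw [Polynomial.coeff_eq_zero_of_natDegree_lt (by omega),
          Polynomial.coeff_eq_zero_of_natDegree_lt (by omega)]
    -- multisets of roots are equal
    have hprod : ∀ z : Fin n → ℝ,
        (∏ i, (X - C (z i))) = ((Finset.univ.val.map z).map (fun a => X - C a)).prod := by
      intro z
      rw [Multiset.map_map, Finset.prod_eq_multiset_prod]
      rfl
    have hmult : Finset.univ.val.map x = Finset.univ.val.map y := by
      have h1 := (Polynomial.roots_multiset_prod_X_sub_C (Finset.univ.val.map x))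
      have h2 := (Polynomial.roots_multiset_prod_X_sub_C (Finset.univ.val.map y))
      rw [← h1, ← h2, ← hprod, ← hprod, hpoly]
    -- turn into list perm
    have huniv : (Finset.univ.val : Multiset (Fin n)) = ↑(List.finRange n) := rfl
    have hlist : (List.ofFn x : Multiset ℝ) = (List.ofFn y : Multiset ℝ) := by
      rw [List.ofFn_eq_map, List.ofFn_eq_map, ← Multiset.map_coe, ← Multiset.map_coe,
        ← huniv, hmult]
    have hperm : (List.ofFn y).Perm (List.ofFn x) :=
      Multiset.coe_eq_coe.1 hlist.symm
    obtain ⟨σ', hσ'⟩ := list_perm_exists_equiv hperm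
    have hly : (List.ofFn y).length = n := List.length_ofFn (f := y)
    have hlx : (List.ofFn x).length = n := List.length_ofFn (f := x)
    refine ⟨(finCongr hly.symm).trans (σ'.trans (finCongr hlx)), fun i => ?_⟩
    have := hσ' (finCongr hly.symm i)
    simp [List.get_ofFn] at this
    exact this
  · rintro ⟨σ, hσ⟩
    have : y = x ∘ σ := funext hσ
    rw [this, inv]
end

section
/- Let X = (X_1,...,X_n) be a tuple of vectors in ℝ^d, define Enc(X_i)(z) = Σ_{j=1}^d X_{ij} z^{j-1} ∈ ℝ[z], and let p_X(t,z) = ∏_{i=1}^n (t - Enc(X_i)(z)) ∈ ℝ[t,z]. If p_X = p_Y as polynomials for tuples X, Y ∈ (ℝ^d)^n, then Y is a permutation of X, i.e., there exists σ ∈ S_n with Y_i = X_{σ(i)} for all i. -/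
open Polynomial

/-- Encoding of a feature vector as a univariate polynomial:
`Enc(w)(z) = ∑_{j=1}^d w_j z^{j-1}`. -/
noncomputable def Enc {d : ℕ} (w : Fin d → ℝ) : Polynomial ℝ :=
  ∑ j : Fin d, C (w j) * X ^ (j : ℕ)

/-- The generalized DeepSets polynomial `p_X(t,z) = ∏ᵢ (t - Enc(Xᵢ)(z))`. -/
noncomputable def genDeepSetsPoly {n d : ℕ} (Xm : Fin n → Fin d → ℝ) :
    Polynomial (Polynomial ℝ) :=
  ∏ i, ((X : Polynomial (Polynomial ℝ)) - C (Enc (Xm i)))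

lemma Enc_coeff {d : ℕ} (w : Fin d → ℝ) (j : Fin d) :
    (Enc w).coeff (j : ℕ) = w j := by
  simp only [Enc, finset_sum_coeff, coeff_C_mul, coeff_X_pow, Fin.val_eq_val]
  simp

lemma Enc_injective {d : ℕ} : Function.Injective (Enc (d := d)) := by
  intro w v h
  funext j
  rw [← Enc_coeff w j, ← Enc_coeff v j, h]

lemma exists_perm_of_map_eq : ∀ (n : ℕ) {α : Type} (f g : Fin n → α),
    Multiset.map f Finset.univ.val = Multiset.map g Finset.univ.val →
    ∃ σ : Equiv.Perm (Fin n), ∀ i, g i = f (σ i) := by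
  intro n
  induction n with
  | zero => exact fun f g _ => ⟨1, fun i => i.elim0⟩
  | succ n ih =>
    intro α f g h
    have hg : g (Fin.last n) ∈ Multiset.map f Finset.univ.val := by
      rw [h]; exact Multiset.mem_map_of_mem g (Finset.mem_univ_val (Fin.last n))
    obtain ⟨j, -, hj⟩ := Multiset.mem_map.mp hg
    set τ : Equiv.Perm (Fin (n + 1)) := Equiv.swap j (Fin.last n) with hτ
    have hmap : ∀ p : Fin (n + 1) → α,
        Multiset.map p Finset.univ.val =
          p (Fin.last n) ::ₘ Multiset.map (fun i : Fin n => p i.castSucc) Finset.univ.val := by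
      intro p
      rw [Fin.univ_val_map, Fin.univ_val_map, List.ofFn_succ']
      simp [List.concat_eq_append, Multiset.cons_swap]
    have hfτ : Multiset.map (f ∘ τ) Finset.univ.val = Multiset.map f Finset.univ.val := by
      conv_rhs => rw [show (Finset.univ.val : Multiset (Fin (n+1))) =
        Multiset.map τ Finset.univ.val by
          rw [show Multiset.map (⇑τ) Finset.univ.val =
            (Finset.univ.map τ.toEmbedding).val by simp [Finset.map]
          , Finset.map_univ_equiv]]
      rw [Multiset.map_map]
    have key : Multiset.map (fun i : Fin n => f (τ i.castSucc)) Finset.univ.val =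
        Multiset.map (fun i : Fin n => g i.castSucc) Finset.univ.val := by
      have h2 := hfτ.trans (h.trans (hmap g))
      rw [hmap (f ∘ τ)] at h2
      have hlastτ : (f ∘ τ) (Fin.last n) = g (Fin.last n) := by
        simp [hτ, Equiv.swap_apply_right, hj]
      rw [hlastτ] at h2
      exact (Multiset.cons_inj_right _).mp h2
    obtain ⟨σ', hσ'⟩ := ih _ _ key
    set ext : Equiv.Perm (Fin (n + 1)) :=
      (finSuccEquivLast.trans (Equiv.optionCongr σ')).trans finSuccEquivLast.symm with hext
    refine ⟨ext.trans τ, fun i => ?_⟩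
    refine Fin.lastCases ?_ ?_ i
    · have : ext (Fin.last n) = Fin.last n := by
        simp [hext, finSuccEquivLast_last]
      simp only [Equiv.trans_apply, this]
      rw [show τ (Fin.last n) = j from Equiv.swap_apply_right _ _, hj]
    · intro k
      have : ext k.castSucc = (σ' k).castSucc := by
        simp [hext, finSuccEquivLast_castSucc]
      simp only [Equiv.trans_apply, this]
      exact hσ' k

/-- If the generalized DeepSets polynomials of two tuples of vectors
coincide, then the tuples are permutations of one another. -/
theorem genDeepSetsPoly_separates
    (n d : ℕ) (Xm Ym : Fin n → Fin d → ℝ)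
    (h : genDeepSetsPoly Xm = genDeepSetsPoly Ym) :
    ∃ σ : Equiv.Perm (Fin n), ∀ i, Ym i = Xm (σ i) := by
  have hprod : ∀ Zm : Fin n → Fin d → ℝ, genDeepSetsPoly Zm =
      ((Finset.univ.val.map (fun i => Enc (Zm i))).map
        (fun a : Polynomial ℝ => (X : Polynomial (Polynomial ℝ)) - C a)).prod := by
    intro Zm
    rw [genDeepSetsPoly, Finset.prod, Multiset.map_map]
    rfl
  have hroots : Finset.univ.val.map (fun i => Enc (Xm i)) =
      Finset.univ.val.map (fun i => Enc (Ym i)) := by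
    have h1 := roots_multiset_prod_X_sub_C (Finset.univ.val.map (fun i => Enc (Xm i)))
    have h2 := roots_multiset_prod_X_sub_C (Finset.univ.val.map (fun i => Enc (Ym i)))
    rw [← hprod Xm] at h1
    rw [← hprod Ym] at h2
    rw [← h1, ← h2, h]
  obtain ⟨σ, hσ⟩ := exists_perm_of_map_eq n _ _ hroots
  exact ⟨σ, fun i => Enc_injective (hσ i)⟩
end

section
/- No differentiable permutation-invariant multiset representation f̂ can be lower-Lipschitz with respect to the Wasserstein-1 distance: for n = 2 and any d, for every ε > 0 there exist multisets X_ε, Y_ε of size 2 in ℝ^d such that ‖f̂(X_ε) − f̂(Y_ε)‖ ≤ ε · W₁(X_ε, Y_ε). -/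
/-- Wasserstein-1 distance between two size-2 multisets in `ℝ^d`, given as pairs. -/
noncomputable def W1Pair {d : ℕ}
    (X Y : EuclideanSpace ℝ (Fin d) × EuclideanSpace ℝ (Fin d)) : ℝ :=
  min ((‖X.1 - Y.1‖ + ‖X.2 - Y.2‖) / 2) ((‖X.1 - Y.2‖ + ‖X.2 - Y.1‖) / 2)

/-- No differentiable permutation-invariant multiset representation
is lower-Lipschitz w.r.t. the Wasserstein-1 distance: for `n = 2` and any `d`, for
every `ε > 0` there are distinct size-2 multisets `X_ε, Y_ε ⊆ ℝ^d` with
`‖f̂(X_ε) − f̂(Y_ε)‖ ≤ ε · W₁(X_ε, Y_ε)`. -/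
theorem no_lower_lipschitz_multiset_representation
    (d m : ℕ) (hd : 0 < d)
    (f : EuclideanSpace ℝ (Fin d) × EuclideanSpace ℝ (Fin d) → EuclideanSpace ℝ (Fin m))
    (hdiff : Differentiable ℝ f)
    (hsymm : ∀ u v, f (u, v) = f (v, u))
    (ε : ℝ) (hε : 0 < ε) :
    ∃ X Y : EuclideanSpace ℝ (Fin d) × EuclideanSpace ℝ (Fin d),
      0 < W1Pair X Y ∧ ‖f X - f Y‖ ≤ ε * W1Pair X Y := by
  set v : EuclideanSpace ℝ (Fin d) := EuclideanSpace.single ⟨0, hd⟩ 1 with hv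
  have hvnorm : ‖v‖ = 1 := by simp [hv]
  set g : ℝ → EuclideanSpace ℝ (Fin m) := fun t => f (t • v, -t • v) with hg
  have hgd : Differentiable ℝ g := by
    apply hdiff.comp
    exact Differentiable.prodMk (by fun_prop) (by fun_prop)
  have heven : ∀ t, g (-t) = g t := by
    intro t
    simp only [hg, neg_neg]
    rw [hsymm]
  have hderiv : deriv g 0 = 0 := by
    have h1 : deriv (fun t => g (-t)) 0 = -deriv g 0 := by
      rw [deriv_comp_neg]; simp
    rw [funext heven] at h1
    have h2 : (2 : ℝ) • deriv g 0 = 0 := by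
      rw [two_smul]; nth_rewrite 1 [h1]; simp
    simpa using (smul_eq_zero.mp h2).resolve_left (by norm_num)
  have hlo : (fun t => g t - g 0) =o[nhds 0] fun t : ℝ => t := by
    have := (hgd 0).hasDerivAt
    rw [hderiv] at this
    have h := this.isLittleO
    simpa using h
  have hev : ∀ᶠ t in nhds (0 : ℝ), ‖g t - g 0‖ ≤ ε * ‖t‖ := hlo.def hε
  rw [Metric.eventually_nhds_iff] at hev
  obtain ⟨δ, hδ, hb⟩ := hev
  set h : ℝ := δ / 2 with hh
  have hh0 : 0 < h := by positivity
  refine ⟨(h • v, -h • v), (0, 0), ?_, ?_⟩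
  · have : W1Pair ((h • v, -h • v) : EuclideanSpace ℝ (Fin d) × EuclideanSpace ℝ (Fin d)) (0, 0) = h := by
      simp [W1Pair, norm_smul, hvnorm, abs_of_pos hh0]

    rw [this]; exact hh0
  · have hW : W1Pair ((h • v, -h • v) : EuclideanSpace ℝ (Fin d) × EuclideanSpace ℝ (Fin d)) (0, 0) = h := by
      simp [W1Pair, norm_smul, hvnorm, abs_of_pos hh0]

    rw [hW]
    have hdist : dist h (0 : ℝ) < δ := by
      rw [Real.dist_eq, sub_zero, abs_of_pos hh0, hh]; linarith
    have := hb hdist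
    have hg0 : g 0 = f (0, 0) := by simp [hg]
    have hgh : g h = f (h • v, -h • v) := by simp [hg]
    rw [hg0, hgh] at this
    calc ‖f (h • v, -h • v) - f (0, 0)‖ ≤ ε * ‖h‖ := this
      _ = ε * h := by rw [Real.norm_eq_abs, abs_of_pos hh0]
end
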